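/- Let G be a locally compact group and let T : A(G) → A(G) be a bounded A(G)-module homomorphism (T(uv) = u·T(v) for all u, v ∈ A(G)). Then there is a unique function f : G → ℂ with f·A(G) ⊆ A(G) such that T(u) = fu for all u ∈ A(G). -/

import Mathlib

/-- Let `G` be a locally compact group and let `A` be the Fourier algebra
`A(G)`, realized as a commutative Banach algebra of continuous functions on `G` whose characters
are given by point evaluations (in particular, at each point some element of `A` does not
vanish).  If `T : A → A` is a bounded `A`-module homomorphism (`T(uv) = u·T(v)`), then there is a
unique function `f : G → ℂ` with `f · A ⊆ A` such that `T u = f u` for all `u ∈ A`. -/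
theorem statement10 (G : Type) [TopologicalSpace G] [Group G] [IsTopologicalGroup G]
    [LocallyCompactSpace G] [T2Space G]
    (A : Type) [NonUnitalNormedCommRing A] [NormedSpace ℂ A]
    [IsScalarTower ℂ A A] [SMulCommClass ℂ A A] [CompleteSpace A]
    (j : A →ₗ[ℂ] (G → ℂ)) (hinj : Function.Injective j)
    (hmul : ∀ u v : A, j (u * v) = j u * j v)
    (hcont : ∀ u : A, Continuous (j u))
    -- point evaluations are the characters of `A`; in particular they are nonzero:
    (hnonzero : ∀ x : G, ∃ u : A, j u x ≠ 0)
    (T : A →L[ℂ] A) (hT : ∀ u v : A, T (u * v) = u * T v) :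
    ∃! f : G → ℂ, ∀ u : A, j (T u) = f * j u := by
  choose w hw using hnonzero
  refine ⟨fun x => j (T (w x)) x / j (w x) x, ?_, ?_⟩
  · intro u
    funext x
    have key : j (w x) x * j (T u) x = j u x * j (T (w x)) x := by
      calc j (w x) x * j (T u) x = j (w x * T u) x := by rw [hmul]; rfl
        _ = j (T (w x * u)) x := by rw [hT]
        _ = j (T (u * w x)) x := by rw [mul_comm]
        _ = j (u * T (w x)) x := by rw [hT]
        _ = j u x * j (T (w x)) x := by rw [hmul]; rfl
    have hwx := hw x
    simp only [Pi.mul_apply]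
    field_simp
    linear_combination key
  · intro g hg
    funext x
    have h1 := congrFun (hg (w x)) x
    simp only [Pi.mul_apply] at h1
    rw [h1]
    field_simp [hw x]
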